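/- The recurrent set of the skew-product flow φᵗ equals S¹ ×_g R(g), where R(g) is the recurrent set of the discrete-time flow generated by g. That is, (s̄, g(s)x) is recurrent for φᵗ if and only if x is recurrent for g. -/

import Mathlib

set_option synthInstance.maxHeartbeats 1000000
set_option maxHeartbeats 1000000


open Filter in
/-- The recurrent set of the skew-product flow `φᵗ` equals `S¹ ×_g R(g)`: a point
`(s̄, g s x)` is recurrent for `φᵗ` iff `x` is recurrent for the discrete flow of `g = g 1`. -/
theorem recurrent_set_skew_product
    {F : Type*} [NormedAddCommGroup F] [NormedSpace ℝ F] [CompleteSpace F]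
    (X g ginv : ℝ → F →L[ℝ] F)
    (hX : Continuous X) (hXper : ∀ t, X (t + 1) = X t)
    (hg0 : g 0 = 1) (hg : ∀ t, HasDerivAt g (X t ∘L g t) t)
    (hinv : ∀ s, g s ∘L ginv s = 1 ∧ ginv s ∘L g s = 1)
    (φ : ℝ → UnitAddCircle × F → UnitAddCircle × F)
    (hφ : ∀ (t s : ℝ) (x : F),
      φ t ((s : UnitAddCircle), x) = (((s + t : ℝ) : UnitAddCircle), g (t + s) (ginv s x))) :
    ∀ (s : ℝ) (x : F),
      (∃ u : ℕ → ℝ, Tendsto u atTop atTop ∧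
          Tendsto (fun k => φ (u k) ((s : UnitAddCircle), g s x)) atTop
            (nhds ((s : UnitAddCircle), g s x))) ↔
      (∃ n : ℕ → ℕ, Tendsto n atTop atTop ∧
          Tendsto (fun k => (g 1 ^ n k) x) atTop (nhds x)) := by
  -- multiplication on `F →L[ℝ] F` is composition
  have hmul : ∀ a b : F →L[ℝ] F, a ∘L b = a * b := fun _ _ => rfl
  have hinv1 : ∀ t, g t * ginv t = 1 := fun t => (hinv t).1
  have hinv2 : ∀ t, ginv t * g t = 1 := fun t => (hinv t).2
  -- `g t` is a unit with inverse `ginv t`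
  have hRinv : ∀ t, Ring.inverse (g t) = ginv t := by
    intro t
    have : Ring.inverse ((⟨g t, ginv t, hinv1 t, hinv2 t⟩ : (F →L[ℝ] F)ˣ) : F →L[ℝ] F)
        = ginv t := Ring.inverse_unit _
    simpa using this
  -- derivative of `ginv`
  have hginv : ∀ t, HasDerivAt ginv (-(ginv t * X t)) t := by
    intro t
    have hu : HasFDerivAt (Ring.inverse : (F →L[ℝ] F) → F →L[ℝ] F)
        (-(ContinuousLinearMap.mulLeftRight ℝ (F →L[ℝ] F) (ginv t) (ginv t))) (g t) := by
      have := hasFDerivAt_ringInverse (𝕜 := ℝ)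
        (x := (⟨g t, ginv t, hinv1 t, hinv2 t⟩ : (F →L[ℝ] F)ˣ))
      simpa using this
    have h := hu.comp_hasDerivAt t (hg t)
    rw [show Ring.inverse ∘ g = ginv from funext fun t => hRinv t] at h
    have h : HasDerivAt ginv
        ((-(ContinuousLinearMap.mulLeftRight ℝ (F →L[ℝ] F) (ginv t) (ginv t))) (X t ∘L g t)) t := h
    convert h using 1
    simp only [ContinuousLinearMap.neg_apply, ContinuousLinearMap.mulLeftRight_apply, hmul]
    rw [show ginv t * (X t * g t) * ginv t = ginv t * X t * (g t * ginv t) by simp only [mul_assoc],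
      hinv1 t, mul_one]
  -- `ginv t * g (t+1)` is constant
  have hgt1 : ∀ t : ℝ, HasDerivAt (fun t => g (t + 1)) (X (t + 1) * g (t + 1)) t := by
    intro t
    have h := (hg (t + 1)).scomp (h := fun t : ℝ => t + 1) (h' := 1) t
      ((hasDerivAt_id t).add_const 1)
    simpa [hmul, Function.comp_def] using h
  have hhd : ∀ t : ℝ, HasDerivAt (fun t => ginv t * g (t + 1)) 0 t := by
    intro t
    have h : HasDerivAt (fun t => ginv t * g (t + 1))
        (-(ginv t * X t) * g (t + 1) + ginv t * (X (t + 1) * g (t + 1))) t := (hginv t).mul (hgt1 t)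
    convert h using 1
    rw [hXper t, neg_mul, mul_assoc, neg_add_cancel]
  have hconst : ∀ t : ℝ, ginv t * g (t + 1) = g 1 := by
    intro t
    have h0 : ginv 0 = 1 := by
      have := hinv2 0
      rwa [hg0, mul_one] at this
    have := is_const_of_deriv_eq_zero (f := fun t => ginv t * g (t + 1))
      (fun t => (hhd t).differentiableAt) (fun t => (hhd t).deriv) t 0
    simpa [h0] using this
  have hco : ∀ t : ℝ, g (t + 1) = g t * g 1 := by
    intro t
    calc g (t + 1) = (g t * ginv t) * g (t + 1) := by rw [hinv1 t, one_mul]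
    _ = g t * (ginv t * g (t + 1)) := by rw [mul_assoc]
    _ = g t * g 1 := by rw [hconst t]
  have hpow : ∀ (t : ℝ) (n : ℕ), g (t + n) = g t * g 1 ^ n := by
    intro t n
    induction n with
    | zero => simp
    | succ n ih =>
      have : (t + (n + 1 : ℕ) : ℝ) = (t + n) + 1 := by push_cast; ring
      rw [this, hco, ih, pow_succ, mul_assoc]
  -- continuity of `ginv`
  have hginvc : Continuous ginv :=
    continuous_iff_continuousAt.2 fun t => (hginv t).continuousAt
  intro s x
  have hx : ginv s (g s x) = x := by
    have : (ginv s ∘L g s) x = (1 : F →L[ℝ] F) x := by rw [(hinv s).2]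
    simpa using this
  constructor
  · rintro ⟨u, hu, hcv⟩
    -- rewrite the flow
    have hcv' : Tendsto (fun k => (((s + u k : ℝ) : UnitAddCircle), g (s + u k) x)) atTop
        (nhds ((s : UnitAddCircle), g s x)) := by
      refine hcv.congr fun k => ?_
      rw [hφ, hx, add_comm (u k) s]
    have h1 : Tendsto (fun k => ((s + u k : ℝ) : UnitAddCircle)) atTop
        (nhds ((s : ℝ) : UnitAddCircle)) :=
      (continuous_fst.tendsto _).comp hcv'
    have h2 : Tendsto (fun k => g (s + u k) x) atTop (nhds (g s x)) :=
      (continuous_snd.tendsto _).comp hcv'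
    -- first coordinate: `u k` tends to `0` in the circle
    have h3 : Tendsto (fun k => ((u k : ℝ) : UnitAddCircle)) atTop (nhds 0) := by
      have := h1.sub (tendsto_const_nhds (x := ((s : ℝ) : UnitAddCircle)))
      simp only [sub_self] at this
      refine this.congr fun k => ?_
      rw [AddCircle.coe_add]
      abel
    have h4 : Tendsto (fun k => u k - round (u k)) atTop (nhds 0) := by
      have hn : Tendsto (fun k => ‖((u k : ℝ) : UnitAddCircle)‖) atTop (nhds 0) := by
        simpa [Function.comp_def] using (continuous_norm.tendsto (0 : UnitAddCircle)).comp h3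
      have : ∀ k, ‖((u k : ℝ) : UnitAddCircle)‖ = |u k - round (u k)| := fun k =>
        UnitAddCircle.norm_eq
      rw [tendsto_zero_iff_norm_tendsto_zero]
      simpa [this, Real.norm_eq_abs] using hn
    set ε : ℕ → ℝ := fun k => u k - round (u k) with hε
    set m : ℕ → ℤ := fun k => round (u k) with hm
    -- `m` tends to infinity
    have hmr : Tendsto (fun k => (m k : ℝ)) atTop atTop := by
      have hneg : Tendsto (fun k => -ε k) atTop (nhds 0) := by simpa using h4.neg
      have : Tendsto (fun k => u k + -ε k) atTop atTop := hu.atTop_add hneg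
      refine this.congr fun k => ?_
      simp only [hε, hm]
      ring
    have hmz : Tendsto m atTop atTop := tendsto_intCast_atTop_iff.mp hmr
    refine ⟨fun k => (m k).toNat, ?_, ?_⟩
    · refine tendsto_atTop.2 fun b => ?_
      filter_upwards [hmz.eventually_ge_atTop (b : ℤ)] with k hk
      exact Int.le_toNat (le_trans (by positivity) hk) |>.2 hk
    · -- main convergence
      have hA : Tendsto (fun k => ginv (s + ε k)) atTop (nhds (ginv s)) := by
        have : Tendsto (fun k => s + ε k) atTop (nhds (s + 0)) :=
          tendsto_const_nhds.add h4
        rw [add_zero] at this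
        exact (hginvc.tendsto s).comp this
      have happ : Tendsto (fun k => ginv (s + ε k) (g (s + u k) x)) atTop
          (nhds (ginv s (g s x))) := by
        have := (isBoundedBilinearMap_apply (𝕜 := ℝ) (E := F) (F := F)).continuous
        exact ((this.tendsto (ginv s, g s x)).comp (hA.prodMk_nhds h2))
      rw [hx] at happ
      refine happ.congr' ?_
      filter_upwards [hmz.eventually_ge_atTop 0] with k hk
      have hnk : ((m k).toNat : ℝ) = (m k : ℝ) := by
        exact_mod_cast congrArg (Int.cast : ℤ → ℝ) (Int.toNat_of_nonneg hk)
      have hsu : s + u k = (s + ε k) + ((m k).toNat : ℕ) := by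
        rw [hnk]; simp only [hε, hm]; ring
      rw [hsu, hpow (s + ε k) ((m k).toNat)]
      have : (ginv (s + ε k) ∘L (g (s + ε k) * g 1 ^ (m k).toNat)) x
          = ((ginv (s + ε k) * g (s + ε k)) * g 1 ^ (m k).toNat) x := by
        rw [hmul, mul_assoc]
      rw [← ContinuousLinearMap.comp_apply, this, hinv2, one_mul]
  · rintro ⟨n, hn, hcv⟩
    refine ⟨fun k => (n k : ℝ), tendsto_natCast_atTop_atTop.comp hn, ?_⟩
    have hcoe : ∀ k : ℕ, ((s + (k : ℝ) : ℝ) : UnitAddCircle) = (s : ℝ) := by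
      intro k
      induction k with
      | zero => norm_num
      | succ k ih =>
        have : (s + ((k : ℕ) + 1 : ℕ) : ℝ) = (s + k) + 1 := by push_cast; ring
        rw [this, AddCircle.coe_add_period, ih]
    have h2 : Tendsto (fun k => g (s + (n k : ℝ)) x) atTop (nhds (g s x)) := by
      have : ∀ k, g (s + (n k : ℝ)) x = g s ((g 1 ^ n k) x) := by
        intro k
        rw [hpow s (n k), ← hmul, ContinuousLinearMap.comp_apply]
      simp only [this]
      exact ((g s).continuous.tendsto x).comp hcv
    have : Tendsto (fun k => (((s + (n k : ℝ) : ℝ) : UnitAddCircle), g (s + (n k : ℝ)) x))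
        atTop (nhds ((s : UnitAddCircle), g s x)) := by
      refine Tendsto.prodMk_nhds ?_ h2
      simp only [hcoe]
      exact tendsto_const_nhds
    refine this.congr fun k => ?_
    rw [hφ, hx, add_comm ((n k : ℝ)) s]
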